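/- Let n ∈ ℕ* and κ > (n−1)/(2n). For every λ ∈ ℝ and every y ∈ ℝ∖{0}, the generalized Hankel function B_λ^{κ,n} is an eigenfunction of the differential–reflection operator T^{κ,n} with eigenvalue −|λ|^{2/n}: T^{κ,n} B_λ^{κ,n}(y) = −|λ|^{2/n} B_λ^{κ,n}(y), where T^{κ,n} f(x) = |x|^{2(1−1/n)} [ f''(x) + (2κ/x) f'(x) − (κ/x²)(f(x) − f(−x)) ]. -/

import Mathlib

open MeasureTheory Real Set
open scoped ENNReal

noncomputable section

namespace Paper

/-- The normalized Bessel function of index `α`: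
`j_α(z) = Γ(α+1) Σ_{k} (−1)^k/(k! Γ(α+k+1)) (z/2)^{2k}`. -/
def besselJ (α : ℝ) (z : ℝ) : ℝ :=
  Real.Gamma (α + 1) *
    ∑' k : ℕ, (-1 : ℝ) ^ k / ((k.factorial : ℝ) * Real.Gamma (α + k + 1)) * (z / 2) ^ (2 * k)

/-- The Gegenbauer polynomial
`C_m^α(t) = (1/Γ(α)) Σ_{k=0}^{⌊m/2⌋} (−1)^k Γ(m−k+α)/(k!(m−2k)!) (2t)^{m−2k}`. -/
def gegenbauer (α : ℝ) (m : ℕ) (t : ℝ) : ℝ :=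
  (1 / Real.Gamma α) *
    ∑ k ∈ Finset.range (m / 2 + 1),
      (-1 : ℝ) ^ k * Real.Gamma (((m - k : ℕ) : ℝ) + α) /
          ((k.factorial : ℝ) * ((m - 2 * k).factorial : ℝ)) * (2 * t) ^ (m - 2 * k)

/-- The Pochhammer symbol `(a)_m = Γ(a+m)/Γ(a)`. -/
def poch (a : ℝ) (m : ℕ) : ℝ := Real.Gamma (a + m) / Real.Gamma a

/-- The constant `C_α = Γ(α+1)/(√π Γ(α+1/2))`. -/
def Cconst (α : ℝ) : ℝ := Real.Gamma (α + 1) / (Real.sqrt π * Real.Gamma (α + 1 / 2))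

/-- `δ(u,v,φ) = √(u² + v² − 2uv cos φ)`. -/
def del (u v φ : ℝ) : ℝ := Real.sqrt (u ^ 2 + v ^ 2 - 2 * u * v * Real.cos φ)

/-- `ψ_n(u,v,φ)`, the polynomial expression of
`(n!/(2α)_n) δ^n C_n^α((u − v cos φ)/δ)` with `δ = √(u²+v²−2uv cos φ)`. -/
def psiN (α : ℝ) (n : ℕ) (u v φ : ℝ) : ℝ :=
  ((n.factorial : ℝ) / (poch (2 * α) n * Real.Gamma α)) *
    ∑ k ∈ Finset.range (n / 2 + 1),
      (-1 : ℝ) ^ k * 2 ^ (n - 2 * k) * Real.Gamma (((n - k : ℕ) : ℝ) + α) /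
          ((k.factorial : ℝ) * ((n - 2 * k).factorial : ℝ)) *
          (u - v * Real.cos φ) ^ (n - 2 * k) *
          (u ^ 2 + v ^ 2 - 2 * u * v * Real.cos φ) ^ k

/-- The Bessel product kernel `K_B^α(u,v,w)`. -/
def besselKernel (α : ℝ) (u v w : ℝ) : ℝ :=
  if |u - v| ≤ w ∧ w ≤ u + v then
    (2 : ℝ) ^ (-2 * α + 1) * Cconst α *
      ((((u + v) ^ 2 - w ^ 2) * (w ^ 2 - (u - v) ^ 2)) ^ (α - 1 / 2)) / (u * v * w) ^ (2 * α)
  else 0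

/-- The constant `M_{κ,n} = 2 (2/n)^{κn−n/2} Γ(κn+1−n/2)`. -/
def Mconst (κ : ℝ) (n : ℕ) : ℝ :=
  2 * (2 / (n : ℝ)) ^ (κ * n - (n : ℝ) / 2) * Real.Gamma (κ * n + 1 - (n : ℝ) / 2)

/-- The measure `dμ_{κ,n}(x) = M_{κ,n}⁻¹ |x|^{2κ+2/n−2} dx` on `ℝ`. -/
def mu (κ : ℝ) (n : ℕ) : Measure ℝ :=
  volume.withDensity fun x => ENNReal.ofReal ((Mconst κ n)⁻¹ * |x| ^ (2 * κ + 2 / (n : ℝ) - 2))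

/-- The generalized Hankel function `B_λ^{κ,n}(x)`. -/
def genHankel (κ : ℝ) (n : ℕ) (lam x : ℝ) : ℂ :=
  ((besselJ (κ * n - (n : ℝ) / 2) ((n : ℝ) * |lam * x| ^ (1 / (n : ℝ))) : ℝ) : ℂ) +
    (-Complex.I) ^ n * ((n : ℂ) / 2) ^ n *
      ((Real.Gamma (κ * n - (n : ℝ) / 2 + 1) / Real.Gamma (κ * n + (n : ℝ) / 2 + 1) : ℝ) : ℂ) *
      ((lam * x : ℝ) : ℂ) *
      ((besselJ (κ * n + (n : ℝ) / 2) ((n : ℝ) * |lam * x| ^ (1 / (n : ℝ))) : ℝ) : ℂ)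

/-- The even part `B^{κ,n}_{λ,e}(x) = j_{κn−n/2}(n|λx|^{1/n})`. -/
def genHankelEven (κ : ℝ) (n : ℕ) (lam x : ℝ) : ℝ :=
  besselJ (κ * n - (n : ℝ) / 2) ((n : ℝ) * |lam * x| ^ (1 / (n : ℝ)))

/-- The odd part `B^{κ,n}_{λ,o}(x) = (n/2)^n (−i)^n λx/(κn−n/2+1)_n · j_{κn+n/2}(n|λx|^{1/n})`. -/
def genHankelOdd (κ : ℝ) (n : ℕ) (lam x : ℝ) : ℂ :=
  ((n : ℂ) / 2) ^ n * (-Complex.I) ^ n * ((lam * x : ℝ) : ℂ) /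
      ((poch (κ * n - (n : ℝ) / 2 + 1) n : ℝ) : ℂ) *
    ((besselJ (κ * n + (n : ℝ) / 2) ((n : ℝ) * |lam * x| ^ (1 / (n : ℝ))) : ℝ) : ℂ)

/-- `σ^n_{x,y,z} = (|x|^{2/n} + |y|^{2/n} − |z|^{2/n})/(2|xy|^{1/n})`. -/
def sigmaP (n : ℕ) (x y z : ℝ) : ℝ :=
  (|x| ^ (2 / (n : ℝ)) + |y| ^ (2 / (n : ℝ)) - |z| ^ (2 / (n : ℝ))) /
    (2 * |x * y| ^ (1 / (n : ℝ)))

/-- `ξ_{κ,n}(x,y,z) = (n! sgn(xy)/(2κn−n)_n) C_n^{κn−n/2}(σ^n_{x,y,z})`. -/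
def xiP (κ : ℝ) (n : ℕ) (x y z : ℝ) : ℝ :=
  (n.factorial : ℝ) * Real.sign (x * y) / poch (2 * κ * n - n) n *
    gegenbauer (κ * n - (n : ℝ) / 2) n (sigmaP n x y z)

/-- The kernel `𝒦_{κ,n}(x,y,z)`. -/
def Kcal (κ : ℝ) (n : ℕ) (x y z : ℝ) : ℝ :=
  Mconst κ n / (2 * n) *
    besselKernel (κ * n - (n : ℝ) / 2) (|x| ^ (1 / (n : ℝ))) (|y| ^ (1 / (n : ℝ)))
      (|z| ^ (1 / (n : ℝ))) *
    (1 + (-1 : ℝ) ^ n * xiP κ n x y z + xiP κ n z x y + xiP κ n y z x)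

/-- The generalized translation operator `τ_x^{κ,n} f(y) = ∫ f(z) dν^{κ,n}_{x,y}(z)`,
where `dν^{κ,n}_{x,y} = 𝒦_{κ,n}(x,y,·) dμ_{κ,n}` if `xy ≠ 0`, `ν_{x,0} = δ_x`, `ν_{0,y} = δ_y`. -/
def tau (κ : ℝ) (n : ℕ) (x : ℝ) (f : ℝ → ℂ) (y : ℝ) : ℂ :=
  if x = 0 then f y
  else if y = 0 then f x
  else ∫ z, f z * ((Kcal κ n x y z : ℝ) : ℂ) ∂(mu κ n)

/-- The generalized convolution `f ⋆_{κ,n} g(x) = ∫ f(y) τ_x^{κ,n} g((−1)^n y) dμ_{κ,n}(y)`. -/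
def conv (κ : ℝ) (n : ℕ) (f g : ℝ → ℂ) (x : ℝ) : ℂ :=
  ∫ y, f y * tau κ n x g ((-1) ^ n * y) ∂(mu κ n)

/-- The generalized Hankel transform `ℱ_{κ,n} f(λ) = ∫ f(x) B_λ^{κ,n}(x) dμ_{κ,n}(x)`. -/
def Fkn (κ : ℝ) (n : ℕ) (f : ℝ → ℂ) (lam : ℝ) : ℂ :=
  ∫ x, f x * genHankel κ n lam x ∂(mu κ n)

/-- The Hankel transform of order `α`:
`ℋ_α(f)(λ) = (1/(2^{α−1} Γ(α+1))) ∫_0^∞ f(t) j_α(tλ) t^{2α+1} dt`. -/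
def HankelT (α : ℝ) (f : ℝ → ℂ) (lam : ℝ) : ℂ :=
  ((1 / ((2 : ℝ) ^ (α - 1) * Real.Gamma (α + 1)) : ℝ) : ℂ) *
    ∫ t in Ioi (0 : ℝ), f t * ((besselJ α (t * lam) * t ^ (2 * α + 1) : ℝ) : ℂ)

/-- The differential–reflection operator
`T^{κ,n} f(x) = |x|^{2(1−1/n)} [ f''(x) + (2κ/x) f'(x) − (κ/x²)(f(x) − f(−x)) ]`. -/
def Top (κ : ℝ) (n : ℕ) (f : ℝ → ℂ) (x : ℝ) : ℂ :=
  ((|x| ^ (2 * (1 - 1 / (n : ℝ))) : ℝ) : ℂ) *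
    (deriv (deriv f) x + ((2 * κ / x : ℝ) : ℂ) * deriv f x -
      ((κ / x ^ 2 : ℝ) : ℂ) * (f x - f (-x)))

private def co (α : ℝ) (k : ℕ) : ℝ :=
  (-1) ^ k * Real.Gamma (α + 1) / (k.factorial * Real.Gamma (α + k + 1))

private def Fs (α u : ℝ) : ℝ := ∑' k : ℕ, co α k * u ^ k
private def Fs1 (α u : ℝ) : ℝ := ∑' k : ℕ, ((k : ℝ) + 1) * co α (k + 1) * u ^ k
private def Fs2 (α u : ℝ) : ℝ :=
  ∑' k : ℕ, ((k : ℝ) + 1) * ((k : ℝ) + 2) * co α (k + 2) * u ^ k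

variable {α : ℝ}

private lemma gamma_pos (hα : -(1/2 : ℝ) < α) (k : ℕ) : (0:ℝ) < α + k + 1 := by
  have : (0:ℝ) ≤ k := Nat.cast_nonneg k
  linarith

private lemma co_rec (hα : -(1/2 : ℝ) < α) (k : ℕ) :
    ((k:ℝ)+1) * (α + k + 1) * co α (k+1) = - co α k := by
  have h1 := gamma_pos hα k
  have h2 : (0:ℝ) < Real.Gamma (α + k + 1) := Real.Gamma_pos_of_pos h1
  have h3 : Real.Gamma (α + ((k:ℕ)+1 : ℕ) + 1) = (α + k + 1) * Real.Gamma (α + k + 1) := by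
    push_cast
    rw [show α + ((k:ℝ)+1) + 1 = (α + ((k:ℝ)) + 1) + 1 by ring,
      Real.Gamma_add_one (ne_of_gt h1)]
  unfold co
  rw [h3, Nat.factorial_succ]
  have hf : ((k.factorial : ℝ)) ≠ 0 := by exact_mod_cast k.factorial_ne_zero
  push_cast
  field_simp
  ring

private lemma co_zero (hα : -(1/2 : ℝ) < α) : co α 0 = 1 := by
  have h : Real.Gamma (α + (0:ℕ) + 1) = Real.Gamma (α + 1) := by norm_num
  have h2 : Real.Gamma (α + 1) ≠ 0 := ne_of_gt (Real.Gamma_pos_of_pos (by linarith))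
  unfold co
  rw [h]
  field_simp
  simp

private lemma co_bound (hα : -(1/2 : ℝ) < α) : ∀ k : ℕ, |co α k| ≤ 2^k / k.factorial := by
  intro k
  induction k with
  | zero => simp [co_zero hα]
  | succ k ih =>
    have h1 := gamma_pos hα k
    have hk : (0:ℝ) ≤ k := Nat.cast_nonneg k
    have hprod : (0:ℝ) < ((k:ℝ)+1) * (α + k + 1) := by positivity
    have hrec := co_rec hα k
    have hco : co α (k+1) = - co α k / (((k:ℝ)+1) * (α + k + 1)) := by
      field_simp at hrec ⊢
      linarith [hrec]
    rw [hco, abs_div, abs_neg, abs_of_pos hprod]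
    have hlow : ((k:ℝ)+1)/2 ≤ ((k:ℝ)+1) * (α + k + 1) := by nlinarith
    have h2 : |co α k| / (((k:ℝ)+1) * (α + k + 1)) ≤ (2^k / k.factorial) / (((k:ℝ)+1)/2) := by
      apply div_le_div₀ (by positivity) ih (by positivity) hlow
    refine h2.trans (le_of_eq ?_)
    rw [Nat.factorial_succ]
    have hf : ((k.factorial : ℝ)) ≠ 0 := by exact_mod_cast k.factorial_ne_zero
    push_cast
    field_simp
    ring

private lemma summable_bound {d : ℕ → ℝ} {M q : ℝ}
    (hd : ∀ k, |d k| ≤ M * q^k / k.factorial) (u : ℝ) :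
    Summable fun k => d k * u ^ k := by
  apply Summable.of_norm_bounded (g := fun k => M * (q*|u|)^k / k.factorial)
    (((Real.summable_pow_div_factorial (q*|u|)).mul_left M).congr (by intro k; ring))
  intro k
  have h1 : ‖d k * u ^ k‖ = |d k| * |u|^k := by
    rw [norm_mul]; simp [abs_pow]
  rw [h1, mul_pow]
  calc |d k| * |u|^k ≤ (M * q^k / k.factorial) * |u|^k := by
        apply mul_le_mul_of_nonneg_right (hd k) (by positivity)
    _ = M * (q^k * |u|^k) / k.factorial := by ring

private lemma deriv_term_bound {d : ℕ → ℝ} {M : ℝ}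
    (hd : ∀ k, |d k| ≤ M * 2^k / k.factorial) {R : ℝ} (hR1 : 1 ≤ R)
    {y : ℝ} (hyR : |y| ≤ R) (k : ℕ) :
    ‖d k * ((k:ℕ) * y ^ (k-1))‖ ≤ M * (4*R)^k / k.factorial := by
  have hk2 : ((k:ℝ)) ≤ 2^k := by exact_mod_cast (k.lt_two_pow_self).le
  have hyk : |y|^(k-1) ≤ R^k := by
    calc |y|^(k-1) ≤ R^(k-1) := pow_le_pow_left₀ (abs_nonneg _) hyR _
      _ ≤ R^k := pow_le_pow_right₀ hR1 (Nat.sub_le k 1)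
  calc ‖d k * ((k:ℕ) * y ^ (k-1))‖ = |d k| * ((k:ℝ) * |y|^(k-1)) := by
        rw [norm_mul]; simp [abs_mul, abs_pow, mul_assoc]
    _ ≤ (M * 2^k / k.factorial) * (2^k * R^k) := by
        have hM : 0 ≤ M := by
          have h0 := (abs_nonneg (d 0)).trans (hd 0)
          simpa using h0
        apply mul_le_mul (hd k) ?_ (by positivity) (by positivity)
        exact mul_le_mul hk2 hyk (by positivity) (by positivity)
    _ = M * (4*R)^k / k.factorial := by
        rw [mul_pow, show (4:ℝ) = 2*2 by norm_num, mul_pow]; ring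

private lemma hasDerivAt_ps {d : ℕ → ℝ} {M : ℝ} (hd : ∀ k, |d k| ≤ M * 2^k / k.factorial)
    (u : ℝ) :
    HasDerivAt (fun t => ∑' k : ℕ, d k * t ^ k) (∑' k : ℕ, d k * ((k:ℕ) * u ^ (k-1))) u := by
  set R : ℝ := |u| + 1 with hR
  have hR1 : (1:ℝ) ≤ R := by simp only [hR, le_add_iff_nonneg_left]; positivity
  have huR : u ∈ Metric.ball (0:ℝ) R := by
    simp [Metric.mem_ball, Real.dist_eq, hR]
  exact hasDerivAt_tsum_of_isPreconnected
    (u := fun k => M * (4*R)^k / k.factorial) (t := Metric.ball (0:ℝ) R) (y₀ := u)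
    (g' := fun k y => d k * ((k:ℕ) * y ^ (k-1)))
    (((Real.summable_pow_div_factorial (4*R)).mul_left M).congr (by intro k; ring))
    Metric.isOpen_ball
    ((convex_ball _ _).isPreconnected)
    (fun k y _hy => (hasDerivAt_pow k y).const_mul (d k))
    (fun k y hy => by
      have hyR : |y| ≤ R := by
        have := Metric.mem_ball.mp hy
        rw [Real.dist_eq, sub_zero] at this
        linarith
      exact deriv_term_bound hd hR1 hyR k)
    huR
    (summable_bound hd u)
    huR

private lemma summable_shifted {d : ℕ → ℝ} {M : ℝ}
    (hd : ∀ k, |d k| ≤ M * 2^k / k.factorial) (u : ℝ) :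
    Summable fun k : ℕ => d k * ((k:ℕ) * u ^ (k-1)) := by
  apply Summable.of_norm_bounded (g := fun k => M * (4*(|u|+1))^k / k.factorial)
    (((Real.summable_pow_div_factorial (4*(|u|+1))).mul_left M).congr (by intro k; ring))
  intro k
  exact deriv_term_bound hd (by linarith [abs_nonneg u]) (by linarith [abs_nonneg u]) k

private lemma bnd0 (hα : -(1/2 : ℝ) < α) :
    ∀ k : ℕ, |co α k| ≤ 1 * 2^k / k.factorial := by
  intro k; simpa using co_bound hα k

private lemma bnd1 (hα : -(1/2 : ℝ) < α) :
    ∀ k : ℕ, |((k:ℝ)+1) * co α (k+1)| ≤ 2 * 2^k / k.factorial := by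
  intro k
  have h := co_bound hα (k+1)
  have hk : (0:ℝ) < (k:ℝ)+1 := by positivity
  have hf : (0:ℝ) < (k.factorial : ℝ) := by exact_mod_cast k.factorial_pos
  rw [abs_mul, abs_of_pos hk]
  calc ((k:ℝ)+1) * |co α (k+1)| ≤ ((k:ℝ)+1) * (2^(k+1) / (k+1).factorial) := by
        exact mul_le_mul_of_nonneg_left h (by positivity)
    _ = 2 * 2^k / k.factorial := by
        rw [Nat.factorial_succ]; push_cast; field_simp; ring

private lemma bnd2 (hα : -(1/2 : ℝ) < α) :
    ∀ k : ℕ, |((k:ℝ)+1) * ((k:ℝ)+2) * co α (k+2)| ≤ 4 * 2^k / k.factorial := by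
  intro k
  have h := co_bound hα (k+2)
  have hk : (0:ℝ) < ((k:ℝ)+1) * ((k:ℝ)+2) := by positivity
  have hf : (0:ℝ) < (k.factorial : ℝ) := by exact_mod_cast k.factorial_pos
  rw [abs_mul, abs_mul, abs_of_pos (show (0:ℝ) < (k:ℝ)+1 by positivity),
    abs_of_pos (show (0:ℝ) < (k:ℝ)+2 by positivity), mul_assoc]
  calc ((k:ℝ)+1) * (((k:ℝ)+2) * |co α (k+2)|)
      ≤ ((k:ℝ)+1) * (((k:ℝ)+2) * (2^(k+2) / (k+2).factorial)) := by
        apply mul_le_mul_of_nonneg_left _ (by positivity)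
        exact mul_le_mul_of_nonneg_left h (by positivity)
    _ = 4 * 2^k / k.factorial := by
        rw [Nat.factorial_succ, Nat.factorial_succ]; push_cast; field_simp; ring

private lemma hasDerivAt_Fs (hα : -(1/2 : ℝ) < α) (u : ℝ) :
    HasDerivAt (fun t => Fs α t) (Fs1 α u) u := by
  have h := hasDerivAt_ps (bnd0 hα) u
  have he : (∑' k : ℕ, co α k * ((k:ℕ) * u ^ (k-1))) = Fs1 α u := by
    rw [Summable.tsum_eq_zero_add (summable_shifted (bnd0 hα) u)]
    simp only [Nat.cast_zero, Nat.cast_ofNat, pow_zero, Nat.add_sub_cancel]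
    rw [zero_mul, mul_zero, zero_add]
    unfold Fs1
    exact tsum_congr fun k => by push_cast; ring
  rw [← he]
  exact h

private lemma hasDerivAt_Fs1 (hα : -(1/2 : ℝ) < α) (u : ℝ) :
    HasDerivAt (fun t => Fs1 α t) (Fs2 α u) u := by
  have h := hasDerivAt_ps (d := fun k => ((k:ℝ)+1) * co α (k+1)) (bnd1 hα) u
  have he : (∑' k : ℕ, ((k:ℝ)+1) * co α (k+1) * ((k:ℕ) * u ^ (k-1))) = Fs2 α u := by
    rw [Summable.tsum_eq_zero_add (summable_shifted (d := fun k => ((k:ℝ)+1) * co α (k+1)) (bnd1 hα) u)]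
    simp only [Nat.cast_zero, pow_zero, Nat.add_sub_cancel]
    rw [zero_mul, mul_zero, zero_add]
    unfold Fs2
    exact tsum_congr fun k => by push_cast; ring
  rw [← he]
  exact h

private lemma ode_Fs (hα : -(1/2 : ℝ) < α) (u : ℝ) :
    u * Fs2 α u = -((α+1) * Fs1 α u) - Fs α u := by
  have S0 : Summable fun k : ℕ => co α k * u^k := summable_bound (bnd0 hα) u
  have S1 : Summable fun k : ℕ => ((k:ℝ)+1) * co α (k+1) * u^k :=
    summable_bound (d := fun k => ((k:ℝ)+1) * co α (k+1)) (bnd1 hα) u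
  set h : ℕ → ℝ := fun k =>
    (-(α+1)) * (((k:ℝ)+1) * co α (k+1) * u^k) - co α k * u^k with hh
  have Sh : Summable h := (S1.mul_left (-(α+1))).sub S0
  have h0 : h 0 = 0 := by
    have hr := co_rec hα 0
    simp only [hh] at *
    push_cast at hr ⊢
    linear_combination -hr
  have e1 : ∑' k, h k = -((α+1) * Fs1 α u) - Fs α u := by
    rw [hh, Summable.tsum_sub (S1.mul_left (-(α+1))) S0, tsum_mul_left]
    unfold Fs Fs1
    ring
  have e2 : u * Fs2 α u = ∑' k : ℕ, h (k+1) := by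
    unfold Fs2
    rw [← tsum_mul_left]
    refine tsum_congr fun k => ?_
    have hr := co_rec hα (k+1)
    simp only [hh]
    push_cast at hr ⊢
    linear_combination (u^(k+1)) * hr
  rw [e2, ← e1, Sh.tsum_eq_zero_add, h0, zero_add]

private lemma besselJ_eq (α z : ℝ) : besselJ α z = Fs α ((z/2)^2) := by
  unfold besselJ Fs
  rw [← tsum_mul_left]
  exact tsum_congr fun k => by rw [pow_mul]; unfold co; ring
private def vf (n : ℕ) (x : ℝ) : ℝ := |x| ^ (2/(n:ℝ))
private def wfn (n : ℕ) (C x : ℝ) : ℝ := 2 * C / (n:ℝ) * vf n x / x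
private def wfn' (n : ℕ) (C x : ℝ) : ℝ := 2 * C / (n:ℝ) * (2/(n:ℝ) - 1) * vf n x / x^2

private lemma vf_eq (n : ℕ) (x : ℝ) : vf n x = (x^2) ^ (1/(n:ℝ)) := by
  unfold vf
  rw [← sq_abs x, ← Real.rpow_natCast |x| 2, ← Real.rpow_mul (abs_nonneg x)]
  congr 1
  push_cast
  ring

private lemma hasDerivAt_vf {n : ℕ} (hn : (n:ℝ) ≠ 0) {x : ℝ} (hx : x ≠ 0) :
    HasDerivAt (vf n) (2/(n:ℝ) * vf n x / x) x := by
  have hx2 : x^2 ≠ 0 := pow_ne_zero _ hx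
  have hx2p : (0:ℝ) < x^2 := by positivity
  have h1 : HasDerivAt (fun t : ℝ => t^2) (2*x) x := by simpa using hasDerivAt_pow 2 x
  have h3 : HasDerivAt (fun t : ℝ => (t^2) ^ (1/(n:ℝ)))
      ((2*x) * (1/(n:ℝ)) * (x^2)^(1/(n:ℝ) - 1)) x := h1.rpow_const (Or.inl hx2)
  have he : vf n = fun t => (t^2) ^ (1/(n:ℝ)) := funext fun t => vf_eq n t
  rw [he]
  convert h3 using 1
  rw [← he, vf_eq, Real.rpow_sub hx2p, Real.rpow_one]
  field_simp

private lemma hasDerivAt_u {n : ℕ} (hn : (n:ℝ) ≠ 0) (C : ℝ) {x : ℝ} (hx : x ≠ 0) :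
    HasDerivAt (fun t => C * vf n t) (wfn n C x) x := by
  have h := (hasDerivAt_vf hn hx).const_mul C
  refine h.congr_deriv ?_
  unfold wfn
  field_simp

private lemma hasDerivAt_w {n : ℕ} (hn : (n:ℝ) ≠ 0) (C : ℝ) {x : ℝ} (hx : x ≠ 0) :
    HasDerivAt (wfn n C) (wfn' n C x) x := by
  have h1 := (hasDerivAt_vf hn hx).const_mul (2*C/(n:ℝ))
  have h2 := h1.div (hasDerivAt_id x) hx
  have h3 : HasDerivAt (wfn n C)
      ((2*C/(n:ℝ) * (2/(n:ℝ) * vf n x / x) * x - 2*C/(n:ℝ) * vf n x * 1) / x^2) x := h2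
  convert h3 using 1
  unfold wfn'
  field_simp

private def BB (α β : ℝ) (n : ℕ) (C : ℝ) (K : ℂ) (x : ℝ) : ℂ :=
  ((Fs α (C * vf n x) : ℝ) : ℂ) + K * (((x : ℝ) : ℂ) * ((Fs β (C * vf n x) : ℝ) : ℂ))

private def DD1 (α β : ℝ) (n : ℕ) (C : ℝ) (K : ℂ) (x : ℝ) : ℂ :=
  ((Fs1 α (C * vf n x) * wfn n C x : ℝ) : ℂ)
    + K * ((Fs β (C * vf n x) : ℝ) : ℂ)
    + K * (((x : ℝ) : ℂ) * ((Fs1 β (C * vf n x) * wfn n C x : ℝ) : ℂ))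

private def DD2 (α β : ℝ) (n : ℕ) (C : ℝ) (K : ℂ) (x : ℝ) : ℂ :=
  ((Fs2 α (C * vf n x) * wfn n C x ^ 2 + Fs1 α (C * vf n x) * wfn' n C x : ℝ) : ℂ)
    + 2 * K * ((Fs1 β (C * vf n x) * wfn n C x : ℝ) : ℂ)
    + K * (((x : ℝ) : ℂ) *
        ((Fs2 β (C * vf n x) * wfn n C x ^ 2 + Fs1 β (C * vf n x) * wfn' n C x : ℝ) : ℂ))

private lemma hasDerivAt_BB {α β : ℝ} (hα : -(1/2:ℝ) < α) (hβ : -(1/2:ℝ) < β) {n : ℕ}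
    (hn : (n:ℝ) ≠ 0) (C : ℝ) (K : ℂ) {x : ℝ} (hx : x ≠ 0) :
    HasDerivAt (BB α β n C K) (DD1 α β n C K x) x := by
  have hu := hasDerivAt_u hn C hx
  have hP : HasDerivAt (fun t => Fs α (C * vf n t)) (Fs1 α (C * vf n x) * wfn n C x) x :=
    (hasDerivAt_Fs hα _).comp x hu
  have hQ : HasDerivAt (fun t => Fs β (C * vf n t)) (Fs1 β (C * vf n x) * wfn n C x) x :=
    (hasDerivAt_Fs hβ _).comp x hu
  have hid : HasDerivAt (fun t : ℝ => ((t : ℝ) : ℂ)) 1 x := by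
    simpa using (hasDerivAt_id x).ofReal_comp
  have h := hP.ofReal_comp.add ((hid.mul hQ.ofReal_comp).const_mul K)
  have h2 := h.congr_of_eventuallyEq (f₁ := BB α β n C K)
    (Filter.Eventually.of_forall fun t => by unfold BB; simp only [Pi.add_apply, Pi.mul_apply])
  refine h2.congr_deriv ?_
  unfold DD1
  push_cast
  ring

private lemma hasDerivAt_DD1 {α β : ℝ} (hα : -(1/2:ℝ) < α) (hβ : -(1/2:ℝ) < β) {n : ℕ}
    (hn : (n:ℝ) ≠ 0) (C : ℝ) (K : ℂ) {x : ℝ} (hx : x ≠ 0) :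
    HasDerivAt (DD1 α β n C K) (DD2 α β n C K x) x := by
  have hu := hasDerivAt_u hn C hx
  have hw := hasDerivAt_w hn C hx
  have hA : HasDerivAt (fun t => Fs1 α (C * vf n t) * wfn n C t)
      (Fs2 α (C * vf n x) * wfn n C x * wfn n C x + Fs1 α (C * vf n x) * wfn' n C x) x :=
    ((hasDerivAt_Fs1 hα _).comp x hu).mul hw
  have hB : HasDerivAt (fun t => Fs1 β (C * vf n t) * wfn n C t)
      (Fs2 β (C * vf n x) * wfn n C x * wfn n C x + Fs1 β (C * vf n x) * wfn' n C x) x :=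
    ((hasDerivAt_Fs1 hβ _).comp x hu).mul hw
  have hQ : HasDerivAt (fun t => Fs β (C * vf n t)) (Fs1 β (C * vf n x) * wfn n C x) x :=
    (hasDerivAt_Fs hβ _).comp x hu
  have hid : HasDerivAt (fun t : ℝ => ((t : ℝ) : ℂ)) 1 x := by
    simpa using (hasDerivAt_id x).ofReal_comp
  have h := (hA.ofReal_comp.add ((hQ.ofReal_comp).const_mul K)).add
      ((hid.mul hB.ofReal_comp).const_mul K)
  have h2 := h.congr_of_eventuallyEq (f₁ := DD1 α β n C K)
    (Filter.Eventually.of_forall fun t => by unfold DD1; simp only [Pi.add_apply, Pi.mul_apply])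
  refine h2.congr_deriv ?_
  unfold DD2
  push_cast
  ring

set_option maxHeartbeats 1000000 in
/-- `B_λ^{κ,n}` is an eigenfunction of the differential–reflection
operator `T^{κ,n}` with eigenvalue `−|λ|^{2/n}`. -/
theorem statement19 (n : ℕ) (hn : 1 ≤ n) (κ : ℝ) (hκ : ((n : ℝ) - 1) / (2 * n) < κ)
    (lam y : ℝ) (hy : y ≠ 0) :
    Top κ n (genHankel κ n lam) y =
      -(((|lam| ^ (2 / (n : ℝ)) : ℝ) : ℂ)) * genHankel κ n lam y := by
  have hn1 : (1:ℝ) ≤ (n:ℝ) := by exact_mod_cast hn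
  have hn0 : (n:ℝ) ≠ 0 := by positivity
  set α : ℝ := κ * n - (n:ℝ)/2 with hαd
  set β : ℝ := κ * n + (n:ℝ)/2 with hβd
  have hκn : ((n:ℝ) - 1)/2 < κ * n := by
    rw [div_lt_iff₀ (by linarith : (0:ℝ) < 2*(n:ℝ))] at hκ
    nlinarith
  have hα : -(1/2:ℝ) < α := by rw [hαd]; nlinarith
  have hβ : -(1/2:ℝ) < β := by rw [hβd]; nlinarith
  set a : ℝ := |lam| ^ (2/(n:ℝ)) with had
  set Cc : ℝ := ((n:ℝ)/2)^2 * a with hCd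
  set K : ℂ := (-Complex.I)^n * ((n:ℂ)/2)^n *
      ((Real.Gamma (α+1)/Real.Gamma (β+1) : ℝ):ℂ) * ((lam:ℝ):ℂ) with hKd
  have hsq : ∀ t : ℝ, (|t| ^ (1/(n:ℝ)))^2 = |t| ^ (2/(n:ℝ)) := fun t => by
    rw [← Real.rpow_natCast (|t| ^ (1/(n:ℝ))) 2, ← Real.rpow_mul (abs_nonneg t)]
    congr 1
    push_cast
    ring
  have h1 : ∀ x : ℝ, (((n:ℝ) * |lam * x| ^ (1/(n:ℝ)))/2)^2 = Cc * vf n x := fun x => by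
    calc (((n:ℝ) * |lam*x|^(1/(n:ℝ)))/2)^2 = ((n:ℝ)/2)^2 * (|lam*x|^(1/(n:ℝ)))^2 := by ring
      _ = ((n:ℝ)/2)^2 * |lam*x|^(2/(n:ℝ)) := by rw [hsq]
      _ = ((n:ℝ)/2)^2 * (|lam|^(2/(n:ℝ)) * |x|^(2/(n:ℝ))) := by
          rw [abs_mul, Real.mul_rpow (abs_nonneg _) (abs_nonneg _)]
      _ = Cc * vf n x := by rw [hCd, had]; unfold vf; ring
  have hBeq : genHankel κ n lam = BB α β n Cc K := by
    funext x
    unfold genHankel BB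
    rw [besselJ_eq, besselJ_eq, ← hαd, ← hβd, h1 x]
    rw [hKd]
    push_cast
    ring
  rw [hBeq]
  have hDD1 : ∀ x : ℝ, x ≠ 0 → HasDerivAt (BB α β n Cc K) (DD1 α β n Cc K x) x :=
    fun x hx => hasDerivAt_BB hα hβ hn0 Cc K hx
  have hev : deriv (BB α β n Cc K) =ᶠ[nhds y] DD1 α β n Cc K := by
    filter_upwards [compl_singleton_mem_nhds hy] with x hx
    exact (hDD1 x hx).deriv
  have eder2 : deriv (deriv (BB α β n Cc K)) y = DD2 α β n Cc K y := by
    rw [Filter.EventuallyEq.deriv_eq hev]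
    exact (hasDerivAt_DD1 hα hβ hn0 Cc K hy).deriv
  have eder1 : deriv (BB α β n Cc K) y = DD1 α β n Cc K y := (hDD1 y hy).deriv
  unfold Top
  rw [eder2, eder1]
  unfold BB DD1 DD2
  have hveven : vf n (-y) = vf n y := by unfold vf; rw [abs_neg]
  rw [hveven]
  set V : ℝ := vf n y with hVd
  set w : ℝ := wfn n Cc y with hwd
  set w' : ℝ := wfn' n Cc y with hw'd
  set T : ℝ := |y| ^ (2 * (1 - 1/(n:ℝ))) with hTd
  set p : ℝ := Fs α (Cc * V) with hpd
  set p1 : ℝ := Fs1 α (Cc * V) with hp1d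
  set p2 : ℝ := Fs2 α (Cc * V) with hp2d
  set q : ℝ := Fs β (Cc * V) with hqd
  set q1 : ℝ := Fs1 β (Cc * V) with hq1d
  set q2 : ℝ := Fs2 β (Cc * V) with hq2d
  have hV : (0:ℝ) < V := by
    rw [hVd]; unfold vf; exact Real.rpow_pos_of_pos (abs_pos.2 hy) _
  have hw2 : w = 2*Cc/(n:ℝ)*V/y := by rw [hwd, hVd]; rfl
  have hw'2 : w' = 2*Cc/(n:ℝ)*(2/(n:ℝ)-1)*V/y^2 := by rw [hw'd, hVd]; rfl
  have hT : T * V = y^2 := by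
    rw [hTd, hVd]; unfold vf
    rw [← Real.rpow_add (abs_pos.2 hy),
      show 2*(1-1/(n:ℝ)) + 2/(n:ℝ) = 2 by field_simp; ring,
      show (2:ℝ) = ((2:ℕ):ℝ) by norm_num, Real.rpow_natCast, sq_abs]
  have hOα : Cc * V * p2 = -((α+1)*p1) - p := by
    rw [hp2d, hp1d, hpd]; exact ode_Fs hα (Cc*V)
  have hOβ : Cc * V * q2 = -((β+1)*q1) - q := by
    rw [hq2d, hq1d, hqd]; exact ode_Fs hβ (Cc*V)
  have hI : T * (p2 * w^2 + p1 * w' + 2*κ/y*(p1*w)) = -(a*p) := by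
    rcases eq_or_ne a 0 with h0 | h0
    · have hC0 : Cc = 0 := by rw [hCd, h0, mul_zero]
      rw [hw2, hw'2, hC0, h0]
      field_simp
      ring
    · have hCV : Cc * V ≠ 0 := by
        have hC : Cc ≠ 0 := by
          rw [hCd]
          exact mul_ne_zero (pow_ne_zero _ (div_ne_zero hn0 two_ne_zero)) h0
        exact mul_ne_zero hC (ne_of_gt hV)
      have hp2v : p2 = (-((α+1)*p1) - p)/(Cc*V) := by
        rw [eq_div_iff hCV]; linear_combination hOα
      have hTv : T = y^2/V := by rw [eq_div_iff (ne_of_gt hV)]; exact hT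
      rw [hp2v, hTv, hw2, hw'2, hαd, hCd]
      field_simp
      ring
  have hII : T * (2*(q1*w) + y*(q2*w^2 + q1*w') + 2*κ/y*(q + y*(q1*w)) - 2*κ/y^2*(y*q))
      = -(a*(y*q)) := by
    rcases eq_or_ne a 0 with h0 | h0
    · have hC0 : Cc = 0 := by rw [hCd, h0, mul_zero]
      rw [hw2, hw'2, hC0, h0]
      field_simp
      ring
    · have hCV : Cc * V ≠ 0 := by
        have hC : Cc ≠ 0 := by
          rw [hCd]
          exact mul_ne_zero (pow_ne_zero _ (div_ne_zero hn0 two_ne_zero)) h0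
        exact mul_ne_zero hC (ne_of_gt hV)
      have hq2v : q2 = (-((β+1)*q1) - q)/(Cc*V) := by
        rw [eq_div_iff hCV]; linear_combination hOβ
      have hTv : T = y^2/V := by rw [eq_div_iff (ne_of_gt hV)]; exact hT
      rw [hq2v, hTv, hw2, hw'2, hβd, hCd]
      field_simp
      ring
  clear_value α β a Cc K V w w' T p p1 p2 q q1 q2
  have hIc := congrArg (Complex.ofReal) hI
  have hIIc := congrArg (Complex.ofReal) hII
  push_cast at hIc hIIc ⊢
  linear_combination hIc + K * hIIc

end Paper
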